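/- Define F(b, δ, z) := 1 + ∫₁^∞ (1 - (1 + z·s^{-1/δ})^{-b}) ds and T(b, δ) := ∫₀^∞ (1 - (1 + r^{-1/δ})^{-b}) dr, for b > 0 and 0 < δ < 1. Then F(b, δ, z) ~ z^δ · T(b, δ) as z → ∞, i.e., lim_{z→∞} F(b,δ,z)/z^δ = T(b,δ). -/

import Mathlib

open MeasureTheory Set Filter

/-- Bernoulli-type bound: `1 - (1+x)^(-b) ≤ max b 1 * x` for `x ≥ 0`, `b > 0`. -/
lemma aux_bernoulli {b : ℝ} (hb : 0 < b) {x : ℝ} (hx : 0 ≤ x) :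
    1 - (1 + x) ^ (-b) ≤ max b 1 * x := by
  set c : ℝ := max b 1 with hc
  have hc1 : (1 : ℝ) ≤ c := le_max_right _ _
  have hbc : b ≤ c := le_max_left _ _
  have h1x : (0:ℝ) < 1 + x := by linarith
  have step1 : (1 + x) ^ (-c) ≤ (1 + x) ^ (-b) :=
    Real.rpow_le_rpow_of_exponent_le (by linarith) (by linarith)
  have hs : (-1 : ℝ) ≤ -x / (1 + x) := by
    rw [neg_div, neg_le_neg_iff, div_le_one h1x]; linarith
  have key : 1 + c * (-x / (1 + x)) ≤ (1 + (-x / (1 + x))) ^ c :=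
    one_add_mul_self_le_rpow_one_add hs hc1
  have heq : 1 + (-x / (1 + x)) = (1 + x) ^ (-1 : ℝ) := by
    rw [Real.rpow_neg_one]; field_simp; ring
  rw [heq, ← Real.rpow_mul h1x.le, neg_one_mul] at key
  -- key : 1 + c * (-x / (1 + x)) ≤ (1 + x) ^ (-c)
  have hfrac : x / (1 + x) ≤ x := by
    rw [div_le_iff₀ h1x]; nlinarith
  have h2 : 1 - c * x ≤ (1 + x) ^ (-c) := by
    have := mul_le_mul_of_nonneg_left hfrac (by positivity : (0:ℝ) ≤ c)
    have hrw : 1 + c * (-x / (1 + x)) = 1 - c * (x / (1 + x)) := by ring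
    rw [hrw] at key
    linarith
  linarith

theorem stmt3 (b δ : ℝ) (hb : 0 < b) (hδ : 0 < δ) (hδ1 : δ < 1) :
    Tendsto (fun z : ℝ =>
        (1 + ∫ s in Ioi (1 : ℝ), (1 - (1 + z * s ^ (-1 / δ)) ^ (-b))) / z ^ δ)
      atTop (nhds (∫ r in Ioi (0 : ℝ), (1 - (1 + r ^ (-1 / δ)) ^ (-b)))) := by
  set f : ℝ → ℝ := fun r => 1 - (1 + r ^ (-1 / δ)) ^ (-b) with hf
  have hmeas : Measurable f :=
    measurable_const.sub ((measurable_const.add (measurable_id.pow_const _)).pow_const _)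
  have hf_nonneg : ∀ r ∈ Ioi (0:ℝ), 0 ≤ f r := by
    intro r hr
    have hr0 : (0:ℝ) < r := hr
    have h1 : (0:ℝ) ≤ r ^ (-1/δ) := (Real.rpow_pos_of_pos hr0 _).le
    have : (1 + r ^ (-1/δ)) ^ (-b) ≤ 1 :=
      Real.rpow_le_one_of_one_le_of_nonpos (by linarith) (by linarith)
    simp only [hf]; linarith
  have hf_le_one : ∀ r ∈ Ioi (0:ℝ), f r ≤ 1 := by
    intro r hr
    have hr0 : (0:ℝ) < r := hr
    have h1 : (0:ℝ) ≤ r ^ (-1/δ) := (Real.rpow_pos_of_pos hr0 _).le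
    have : (0:ℝ) < (1 + r ^ (-1/δ)) ^ (-b) := Real.rpow_pos_of_pos (by linarith) _
    simp only [hf]; linarith
  have hexp : (-1/δ) < -1 := by
    rw [neg_div, neg_lt_neg_iff, lt_div_iff₀ hδ]; linarith
  have hInt1 : IntegrableOn f (Ioc (0:ℝ) 1) := by
    apply Measure.integrableOn_of_bounded (M := 1)
    · simp [measure_Ioc_lt_top.ne]
    · exact hmeas.aestronglyMeasurable
    · filter_upwards [ae_restrict_mem measurableSet_Ioc] with r hr
      rw [Real.norm_eq_abs, abs_le]
      exact ⟨by linarith [hf_nonneg r hr.1], hf_le_one r hr.1⟩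
  have hInt2 : IntegrableOn f (Ioi (1:ℝ)) := by
    have hg : IntegrableOn (fun r : ℝ => max b 1 * r ^ (-1/δ)) (Ioi (1:ℝ)) :=
      (integrableOn_Ioi_rpow_of_lt hexp one_pos).const_mul _
    apply hg.mono' hmeas.aestronglyMeasurable
    filter_upwards [ae_restrict_mem measurableSet_Ioi] with r hr
    have hr1 : (1:ℝ) < r := hr
    have hr0 : (0:ℝ) < r := by linarith
    have hx : (0:ℝ) ≤ r ^ (-1/δ) := (Real.rpow_pos_of_pos hr0 _).le
    rw [Real.norm_eq_abs, abs_le]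
    have h0 : (0:ℝ) ≤ max b 1 * r ^ (-1/δ) := by positivity
    have h1 : (0:ℝ) ≤ f r := hf_nonneg r (mem_Ioi.mpr hr0)
    exact ⟨(neg_nonpos_of_nonneg h0).trans h1, aux_bernoulli hb hx⟩
  have hInt0 : IntegrableOn f (Ioi (0:ℝ)) := by
    rw [← Ioc_union_Ioi_eq_Ioi (zero_le_one)]
    exact hInt1.union hInt2
  set T : ℝ := ∫ r in Ioi (0:ℝ), f r with hT
  -- splitting identity
  have hsplit : ∀ ε : ℝ, 0 < ε →
      T = (∫ r in Ioc (0:ℝ) ε, f r) + ∫ r in Ioi ε, f r := by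
    intro ε hε
    rw [hT, ← Ioc_union_Ioi_eq_Ioi hε.le]
    exact setIntegral_union Ioc_disjoint_Ioi_same measurableSet_Ioi
      (hInt0.mono_set Ioc_subset_Ioi_self)
      (hInt0.mono_set (Ioi_subset_Ioi hε.le))
  -- bound on the small piece
  have hsmall : ∀ ε : ℝ, 0 < ε → (0 ≤ ∫ r in Ioc (0:ℝ) ε, f r) ∧ (∫ r in Ioc (0:ℝ) ε, f r) ≤ ε := by
    intro ε hε
    constructor
    · apply setIntegral_nonneg measurableSet_Ioc
      intro r hr; exact hf_nonneg r hr.1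
    · have hnorm : ‖∫ r in Ioc (0:ℝ) ε, f r‖ ≤ 1 * (volume (Ioc (0:ℝ) ε)).toReal := by
        apply norm_setIntegral_le_of_norm_le_const measure_Ioc_lt_top
        · intro r hr
          rw [Real.norm_eq_abs, abs_le]
          exact ⟨by linarith [hf_nonneg r hr.1], hf_le_one r hr.1⟩
      rw [Real.volume_Ioc, sub_zero, ENNReal.toReal_ofReal hε.le, one_mul,
        Real.norm_eq_abs] at hnorm
      have := abs_le.mp hnorm
      linarith [this.2]
  -- the correction term tends to 0
  have hcorr : Tendsto (fun z : ℝ => z ^ (-δ) - ∫ r in Ioc (0:ℝ) (z ^ (-δ)), f r) atTop (nhds 0) := by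
    apply squeeze_zero' (g := fun z : ℝ => z ^ (-δ))
    · filter_upwards [eventually_gt_atTop (0:ℝ)] with z hz
      have hεp : (0:ℝ) < z ^ (-δ) := Real.rpow_pos_of_pos hz _
      linarith [(hsmall _ hεp).2]
    · filter_upwards [eventually_gt_atTop (0:ℝ)] with z hz
      have hεp : (0:ℝ) < z ^ (-δ) := Real.rpow_pos_of_pos hz _
      linarith [(hsmall _ hεp).1]
    · exact tendsto_rpow_neg_atTop hδ
  have hlim : Tendsto (fun z : ℝ => z ^ (-δ) + ∫ r in Ioi (z ^ (-δ)), f r) atTop (nhds T) := by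
    have := hcorr.const_add T
    rw [add_zero] at this
    apply this.congr'
    filter_upwards [eventually_gt_atTop (0:ℝ)] with z hz
    have hεp : (0:ℝ) < z ^ (-δ) := Real.rpow_pos_of_pos hz _
    rw [hsplit _ hεp]
    ring
  -- the actual function eventually equals this
  apply hlim.congr'
  filter_upwards [eventually_gt_atTop (0:ℝ)] with z hz
  have hεp : (0:ℝ) < z ^ (-δ) := Real.rpow_pos_of_pos hz _
  have hzd : (0:ℝ) < z ^ δ := Real.rpow_pos_of_pos hz _
  -- rewrite the integrand
  have hcongr : (∫ s in Ioi (1:ℝ), (1 - (1 + z * s ^ (-1 / δ)) ^ (-b)))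
      = ∫ s in Ioi (1:ℝ), f (s * z ^ (-δ)) := by
    apply setIntegral_congr_fun measurableSet_Ioi
    intro s hs
    have hs0 : (0:ℝ) < s := lt_trans zero_lt_one hs
    simp only [hf]
    congr 2
    rw [Real.mul_rpow hs0.le hεp.le, ← Real.rpow_mul hz.le]
    have : -δ * (-1/δ) = 1 := by field_simp
    rw [this, Real.rpow_one, mul_comm]
  have hchg : (∫ s in Ioi (1:ℝ), f (s * z ^ (-δ)))
      = (z ^ (-δ))⁻¹ • ∫ r in Ioi (1 * z ^ (-δ)), f r :=
    integral_comp_mul_right_Ioi f 1 hεp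
  have hinv : (z ^ (-δ))⁻¹ = z ^ δ := by
    rw [Real.rpow_neg hz.le, inv_inv]
  rw [hcongr, hchg, hinv, one_mul, smul_eq_mul, Real.rpow_neg hz.le,
    eq_div_iff hzd.ne']
  field_simp
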